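/- Let a, b, c be positive, pairwise coprime, squarefree integers. If bc is a square modulo a, ac is a square modulo b, and -ab is a square modulo c, then the equation a·x² + b·y² = c·z² has a solution in integers x, y, z not all zero. -/

import Mathlib

lemma aux_sqrt_mod (n m : ℤ) (hn : 0 < n) (h : IsSquare ((m : ℤ) : ZMod n.toNat)) :
    ∃ u : ℤ, n ∣ u ^ 2 - m := by
  obtain ⟨r, hr⟩ := h
  refine ⟨(r.val : ℤ), ?_⟩
  have hn' : (n.toNat : ℤ) = n := Int.toNat_of_nonneg hn.le
  haveI : NeZero n.toNat := ⟨by omega⟩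
  have h0 : (((r.val : ℤ) ^ 2 - m : ℤ) : ZMod n.toNat) = 0 := by
    push_cast
    rw [ZMod.natCast_val, ZMod.cast_id, hr]
    ring
  have := (ZMod.intCast_zmod_eq_zero_iff_dvd _ _).mp h0
  rwa [hn'] at this

lemma aux_crt2 (m n r s : ℤ) (h : IsCoprime m n) : ∃ x : ℤ, m ∣ x - r ∧ n ∣ x - s := by
  obtain ⟨p, q, hpq⟩ := h
  exact ⟨r * q * n + s * p * m, ⟨(s - r) * p, by linear_combination r * hpq⟩,
    ⟨(r - s) * q, by linear_combination s * hpq⟩⟩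

lemma aux_crt3 (a b c r s t : ℤ) (hab : IsCoprime a b) (hbc : IsCoprime b c)
    (hac : IsCoprime a c) : ∃ x : ℤ, a ∣ x - r ∧ b ∣ x - s ∧ c ∣ x - t := by
  obtain ⟨y, hyb, hyc⟩ := aux_crt2 b c s t hbc
  obtain ⟨x, hxa, hx⟩ := aux_crt2 a (b * c) r y (hab.mul_right hac)
  refine ⟨x, hxa, ?_, ?_⟩
  · have h1 : b ∣ x - y := dvd_trans (dvd_mul_right b c) hx
    simpa using dvd_add h1 hyb
  · have h1 : c ∣ x - y := dvd_trans (dvd_mul_left c b) hx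
    simpa using dvd_add h1 hyc

lemma aux_pigeon (N : ℕ) (hN : 0 < N) (α β γ : ℤ) (X Y Z : ℕ)
    (hcard : N < (X + 1) * (Y + 1) * (Z + 1)) :
    ∃ x y z : ℤ, ¬(x = 0 ∧ y = 0 ∧ z = 0) ∧ x.natAbs ≤ X ∧ y.natAbs ≤ Y ∧ z.natAbs ≤ Z ∧
      (N : ℤ) ∣ α * x + β * y + γ * z := by
  haveI : NeZero N := ⟨hN.ne'⟩
  set S : Finset (ℕ × ℕ × ℕ) :=
    Finset.range (X + 1) ×ˢ Finset.range (Y + 1) ×ˢ Finset.range (Z + 1) with hS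
  have hScard : S.card = (X + 1) * (Y + 1) * (Z + 1) := by
    simp [hS, Finset.card_product, mul_assoc]
  have hlt : (Finset.univ : Finset (ZMod N)).card < S.card := by
    rw [hScard, Finset.card_univ, ZMod.card]; exact hcard
  obtain ⟨t₁, ht₁, t₂, ht₂, hne, heq⟩ :=
    Finset.exists_ne_map_eq_of_card_lt_of_maps_to hlt
      (f := fun t : ℕ × ℕ × ℕ => ((α * t.1 + β * t.2.1 + γ * t.2.2 : ℤ) : ZMod N))
      (fun t _ => Finset.mem_univ _)
  simp only [hS, Finset.mem_product, Finset.mem_range] at ht₁ ht₂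
  refine ⟨(t₁.1 : ℤ) - t₂.1, (t₁.2.1 : ℤ) - t₂.2.1, (t₁.2.2 : ℤ) - t₂.2.2, ?_, ?_, ?_, ?_, ?_⟩
  · rintro ⟨h1, h2, h3⟩
    apply hne
    have e1 : t₁.1 = t₂.1 := by omega
    have e2 : t₁.2.1 = t₂.2.1 := by omega
    have e3 : t₁.2.2 = t₂.2.2 := by omega
    exact Prod.ext e1 (Prod.ext e2 e3)
  · omega
  · omega
  · omega
  · have h0 : ((α * ((t₁.1 : ℤ) - t₂.1) + β * ((t₁.2.1 : ℤ) - t₂.2.1)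
        + γ * ((t₁.2.2 : ℤ) - t₂.2.2) : ℤ) : ZMod N) = 0 := by
      push_cast
      push_cast at heq
      linear_combination heq
    exact (ZMod.intCast_zmod_eq_zero_iff_dvd _ _).mp h0

lemma aux_sq_eq_one (n z : ℤ) (h : Squarefree n) (hz : z ^ 2 = n) : n = 1 := by
  have hu : IsUnit z := h z ⟨1, by rw [← hz]; ring⟩
  rcases Int.isUnit_iff.mp hu with h1 | h1 <;> rw [h1] at hz <;> simpa using hz.symm


set_option maxHeartbeats 1000000

/-- Legendre's theorem on the equation `a x² + b y² = c z²`. -/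
theorem legendre_equation (a b c : ℤ) (ha : 0 < a) (hb : 0 < b) (hc : 0 < c)
    (hab : IsCoprime a b) (hbc : IsCoprime b c) (hac : IsCoprime a c)
    (sqa : Squarefree a) (sqb : Squarefree b) (sqc : Squarefree c)
    (h1 : IsSquare ((b * c : ℤ) : ZMod a.toNat))
    (h2 : IsSquare ((a * c : ℤ) : ZMod b.toNat))
    (h3 : IsSquare ((-(a * b) : ℤ) : ZMod c.toNat)) :
    ∃ x y z : ℤ, ¬(x = 0 ∧ y = 0 ∧ z = 0) ∧ a * x ^ 2 + b * y ^ 2 = c * z ^ 2 := by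
  obtain ⟨u, hu⟩ := aux_sqrt_mod a (b * c) ha h1
  obtain ⟨v, hv⟩ := aux_sqrt_mod b (a * c) hb h2
  obtain ⟨w, hw⟩ := aux_sqrt_mod c (-(a * b)) hc h3
  obtain ⟨α, hαa, hαb, hαc⟩ := aux_crt3 a b c 0 a a hab hbc hac
  obtain ⟨β, hβa, hβb, hβc⟩ := aux_crt3 a b c b 0 (-w) hab hbc hac
  obtain ⟨γ, hγa, hγb, hγc⟩ := aux_crt3 a b c (-u) (-v) 0 hab hbc hac
  -- key divisibility
  have hkey : ∀ x y z : ℤ, a * b * c ∣ α * x + β * y + γ * z →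
      a * b * c ∣ a * x ^ 2 + b * y ^ 2 - c * z ^ 2 := by
    intro x y z hL
    have hQa : a ∣ a * x ^ 2 + b * y ^ 2 - c * z ^ 2 := by
      have hLa : a ∣ α * x + β * y + γ * z := dvd_trans (⟨b * c, by ring⟩ : a ∣ a * b * c) hL
      have ha1 : a ∣ b * y - u * z := by
        have h' := ((hLa.sub (hαa.mul_left x)).sub (hβa.mul_left y)).sub (hγa.mul_left z)
        convert h' using 1; rfl; ring
      have h5 : a ∣ b * (a * x ^ 2 + b * y ^ 2 - c * z ^ 2) := by
        have e : b * (a * x ^ 2 + b * y ^ 2 - c * z ^ 2) =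
            (b * y - u * z) * (b * y + u * z) + (u ^ 2 - b * c) * z ^ 2 + a * (b * x ^ 2) := by
          ring
        rw [e]
        exact dvd_add (dvd_add (ha1.mul_right _) (hu.mul_right _)) (dvd_mul_right _ _)
      exact hab.dvd_of_dvd_mul_left h5
    have hQb : b ∣ a * x ^ 2 + b * y ^ 2 - c * z ^ 2 := by
      have hLb : b ∣ α * x + β * y + γ * z := dvd_trans (⟨a * c, by ring⟩ : b ∣ a * b * c) hL
      have hb1 : b ∣ a * x - v * z := by
        have h' := ((hLb.sub (hαb.mul_left x)).sub (hβb.mul_left y)).sub (hγb.mul_left z)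
        convert h' using 1; rfl; ring
      have h5 : b ∣ a * (a * x ^ 2 + b * y ^ 2 - c * z ^ 2) := by
        have e : a * (a * x ^ 2 + b * y ^ 2 - c * z ^ 2) =
            (a * x - v * z) * (a * x + v * z) + (v ^ 2 - a * c) * z ^ 2 + b * (a * y ^ 2) := by
          ring
        rw [e]
        exact dvd_add (dvd_add (hb1.mul_right _) (hv.mul_right _)) (dvd_mul_right _ _)
      exact hab.symm.dvd_of_dvd_mul_left h5
    have hQc : c ∣ a * x ^ 2 + b * y ^ 2 - c * z ^ 2 := by
      have hLc : c ∣ α * x + β * y + γ * z := dvd_trans (⟨a * b, by ring⟩ : c ∣ a * b * c) hL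
      have hc1 : c ∣ a * x - w * y := by
        have h' := ((hLc.sub (hαc.mul_left x)).sub (hβc.mul_left y)).sub (hγc.mul_left z)
        convert h' using 1; rfl; ring
      have h5 : c ∣ a * (a * x ^ 2 + b * y ^ 2 - c * z ^ 2) := by
        have e : a * (a * x ^ 2 + b * y ^ 2 - c * z ^ 2) =
            (a * x - w * y) * (a * x + w * y) + (w ^ 2 - -(a * b)) * y ^ 2 + c * (-(a * z ^ 2)) := by
          ring
        rw [e]
        exact dvd_add (dvd_add (hc1.mul_right _) (hw.mul_right _)) (dvd_mul_right _ _)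
      exact hac.symm.dvd_of_dvd_mul_left h5
    exact (hac.mul_left hbc).mul_dvd (hab.mul_dvd hQa hQb) hQc
  -- pigeonhole setup
  set N : ℕ := (a * b * c).toNat with hN
  set X : ℕ := Nat.sqrt (b * c).toNat with hX
  set Y : ℕ := Nat.sqrt (a * c).toNat with hY
  set Z : ℕ := Nat.sqrt (a * b).toNat with hZ
  have hbc0 : (0:ℤ) < b * c := by positivity
  have hac0 : (0:ℤ) < a * c := by positivity
  have hab0 : (0:ℤ) < a * b := by positivity
  have habc0 : (0:ℤ) < a * b * c := by positivity
  have hNc : (N : ℤ) = a * b * c := Int.toNat_of_nonneg habc0.le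
  have hpc : (((b * c).toNat : ℕ) : ℤ) = b * c := Int.toNat_of_nonneg hbc0.le
  have hqc : (((a * c).toNat : ℕ) : ℤ) = a * c := Int.toNat_of_nonneg hac0.le
  have hrc : (((a * b).toNat : ℕ) : ℤ) = a * b := Int.toNat_of_nonneg hab0.le
  have hX2 : ((X : ℤ)) ^ 2 ≤ b * c := by
    have := Nat.sqrt_le' (b * c).toNat
    calc ((X : ℤ)) ^ 2 = ((X ^ 2 : ℕ) : ℤ) := by push_cast; ring
    _ ≤ (((b * c).toNat : ℕ) : ℤ) := by exact_mod_cast this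
    _ = b * c := hpc
  have hY2 : ((Y : ℤ)) ^ 2 ≤ a * c := by
    have := Nat.sqrt_le' (a * c).toNat
    calc ((Y : ℤ)) ^ 2 = ((Y ^ 2 : ℕ) : ℤ) := by push_cast; ring
    _ ≤ (((a * c).toNat : ℕ) : ℤ) := by exact_mod_cast this
    _ = a * c := hqc
  have hZ2 : ((Z : ℤ)) ^ 2 ≤ a * b := by
    have := Nat.sqrt_le' (a * b).toNat
    calc ((Z : ℤ)) ^ 2 = ((Z ^ 2 : ℕ) : ℤ) := by push_cast; ring
    _ ≤ (((a * b).toNat : ℕ) : ℤ) := by exact_mod_cast this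
    _ = a * b := hrc
  have hN0 : 0 < N := by
    have h0 : (0:ℤ) < (N:ℤ) := hNc ▸ habc0
    exact_mod_cast h0
  -- counting inequality
  have hcard : N < (X + 1) * (Y + 1) * (Z + 1) := by
    set p : ℕ := (b * c).toNat
    set q : ℕ := (a * c).toNat
    set r : ℕ := (a * b).toNat
    have hp : p < (X + 1) ^ 2 := Nat.lt_succ_sqrt' p
    have hq : q < (Y + 1) ^ 2 := Nat.lt_succ_sqrt' q
    have hr : r < (Z + 1) ^ 2 := Nat.lt_succ_sqrt' r
    have hNN : N * N = p * q * r := by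
      have : ((N * N : ℕ) : ℤ) = ((p * q * r : ℕ) : ℤ) := by
        push_cast
        rw [hNc, hpc, hqc, hrc]
        ring
      exact_mod_cast this
    by_contra hcon
    push_neg at hcon
    have h2' : (X + 1) * (Y + 1) * (Z + 1) * ((X + 1) * (Y + 1) * (Z + 1)) ≤ N * N :=
      Nat.mul_le_mul hcon hcon
    have m1 : (p + 1) * (q + 1) ≤ (X + 1) ^ 2 * (Y + 1) ^ 2 := Nat.mul_le_mul hp hq
    have m2 : (p + 1) * (q + 1) * (r + 1) ≤ (X + 1) ^ 2 * (Y + 1) ^ 2 * (Z + 1) ^ 2 :=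
      Nat.mul_le_mul m1 hr
    have m3 : p * q * r < (p + 1) * (q + 1) * (r + 1) := by
      nlinarith [Nat.zero_le (p * q), Nat.zero_le (p * r), Nat.zero_le (q * r)]
    have m4 : (X + 1) * (Y + 1) * (Z + 1) * ((X + 1) * (Y + 1) * (Z + 1)) =
        (X + 1) ^ 2 * (Y + 1) ^ 2 * (Z + 1) ^ 2 := by ring
    linarith [m2, m3, hNN, h2', m4.le, m4.ge]
  obtain ⟨x, y, z, hnt, hxb, hyb, hzb, hL⟩ := aux_pigeon N hN0 α β γ X Y Z hcard
  rw [hNc] at hL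
  have hQ := hkey x y z hL
  -- bounds on squares
  have hxsq : x ^ 2 ≤ b * c := by
    have h' : ((x.natAbs : ℤ)) ^ 2 ≤ ((X : ℤ)) ^ 2 := by
      have : (x.natAbs : ℤ) ≤ (X : ℤ) := by exact_mod_cast hxb
      exact pow_le_pow_left₀ (by positivity) this 2
    calc x ^ 2 = ((x.natAbs : ℤ)) ^ 2 := (Int.natAbs_sq x).symm
    _ ≤ ((X : ℤ)) ^ 2 := h'
    _ ≤ b * c := hX2
  have hysq : y ^ 2 ≤ a * c := by
    have h' : ((y.natAbs : ℤ)) ^ 2 ≤ ((Y : ℤ)) ^ 2 := by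
      have : (y.natAbs : ℤ) ≤ (Y : ℤ) := by exact_mod_cast hyb
      exact pow_le_pow_left₀ (by positivity) this 2
    calc y ^ 2 = ((y.natAbs : ℤ)) ^ 2 := (Int.natAbs_sq y).symm
    _ ≤ ((Y : ℤ)) ^ 2 := h'
    _ ≤ a * c := hY2
  have hzsq : z ^ 2 ≤ a * b := by
    have h' : ((z.natAbs : ℤ)) ^ 2 ≤ ((Z : ℤ)) ^ 2 := by
      have : (z.natAbs : ℤ) ≤ (Z : ℤ) := by exact_mod_cast hzb
      exact pow_le_pow_left₀ (by positivity) this 2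
    calc z ^ 2 = ((z.natAbs : ℤ)) ^ 2 := (Int.natAbs_sq z).symm
    _ ≤ ((Z : ℤ)) ^ 2 := h'
    _ ≤ a * b := hZ2
  obtain ⟨k, hk⟩ := hQ
  have t1 : 0 ≤ a * x ^ 2 := mul_nonneg ha.le (sq_nonneg x)
  have t2 : 0 ≤ b * y ^ 2 := mul_nonneg hb.le (sq_nonneg y)
  have t3 : 0 ≤ c * z ^ 2 := mul_nonneg hc.le (sq_nonneg z)
  have t4 : a * x ^ 2 ≤ a * (b * c) := mul_le_mul_of_nonneg_left hxsq ha.le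
  have t5 : b * y ^ 2 ≤ b * (a * c) := mul_le_mul_of_nonneg_left hysq hb.le
  have t6 : c * z ^ 2 ≤ c * (a * b) := mul_le_mul_of_nonneg_left hzsq hc.le
  have hk1 : -1 ≤ k := le_of_mul_le_mul_left (by linarith [hk, t1, t2, t6]) habc0
  have hk2 : k ≤ 2 := le_of_mul_le_mul_left (by linarith [hk, t3, t4, t5]) habc0
  interval_cases k
  · -- k = -1 : forces a = b = 1, use sum of two squares
    have hax : a * x ^ 2 = 0 := le_antisymm (by linarith [hk, t2, t6]) t1
    have hby : b * y ^ 2 = 0 := le_antisymm (by linarith [hk, t1, t6]) t2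
    have hz2 : z ^ 2 = a * b := by
      have h6 : c * z ^ 2 = c * (a * b) := by linarith [hk, hax, hby]
      exact mul_left_cancel₀ hc.ne' h6
    have hab1 : a * b = 1 :=
      aux_sq_eq_one _ z (squarefree_mul_iff.mpr ⟨hab.isRelPrime, sqa, sqb⟩) hz2
    have ha1 : a = 1 := by
      have := Int.eq_one_of_mul_eq_one_right ha.le hab1
      omega
    have hb1 : b = 1 := by
      have := Int.eq_one_of_mul_eq_one_left hb.le hab1
      omega
    have h3' : IsSquare (-1 : ZMod c.toNat) := by
      have : ((-(a * b) : ℤ) : ZMod c.toNat) = -1 := by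
        rw [ha1, hb1]; push_cast; ring
      rwa [this] at h3
    obtain ⟨x', y', hxy⟩ := Nat.eq_sq_add_sq_of_isSquare_mod_neg_one h3'
    refine ⟨(x' : ℤ), (y' : ℤ), 1, by simp, ?_⟩
    have hcc : ((c.toNat : ℕ) : ℤ) = c := Int.toNat_of_nonneg hc.le
    rw [ha1, hb1]
    have h7 : ((c.toNat : ℕ) : ℤ) = ((x' ^ 2 + y' ^ 2 : ℕ) : ℤ) := by rw [hxy]
    push_cast at h7
    rw [hcc] at h7
    linarith
  · -- k = 0
    exact ⟨x, y, z, hnt, by linarith [hk]⟩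
  · -- k = 1 : use the composition identity
    refine ⟨x * z + b * y, y * z - a * x, z ^ 2 + a * b, ?_, by linear_combination (z ^ 2 + a * b) * hk⟩
    rintro ⟨-, -, h0⟩
    linarith [sq_nonneg z, hab0]
  · -- k = 2 : forces a = b = c = 1
    have hx2 : x ^ 2 = b * c := by
      have h6 : a * x ^ 2 = a * (b * c) := le_antisymm t4 (by linarith [hk, t3, t5])
      exact mul_left_cancel₀ ha.ne' h6
    have hy2 : y ^ 2 = a * c := by
      have h6 : b * y ^ 2 = b * (a * c) := le_antisymm t5 (by linarith [hk, t3, t4])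
      exact mul_left_cancel₀ hb.ne' h6
    have hbc1 : b * c = 1 :=
      aux_sq_eq_one _ x (squarefree_mul_iff.mpr ⟨hbc.isRelPrime, sqb, sqc⟩) hx2
    have hac1 : a * c = 1 :=
      aux_sq_eq_one _ y (squarefree_mul_iff.mpr ⟨hac.isRelPrime, sqa, sqc⟩) hy2
    have hc1 : c = 1 := by
      have := Int.eq_one_of_mul_eq_one_left hc.le hbc1
      omega
    have hb1 : b = 1 := by
      have := Int.eq_one_of_mul_eq_one_right hb.le hbc1
      omega
    have ha1 : a = 1 := by
      have := Int.eq_one_of_mul_eq_one_right ha.le hac1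
      omega
    exact ⟨0, 1, 1, by simp, by rw [ha1, hb1, hc1]; ring⟩
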